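/- (Unbounded stealthy actuator attack, core of Proposition 1.) Let A ∈ ℂ^{n×n}, B ∈ ℂ^{n×n_u}, C ∈ ℂ^{n_y×n}, D ∈ ℂ^{n_y×n_u}, and let z₀ ∈ ℂ with |z₀| > 1, x₀ ∈ ℂ^n, and ν ∈ ℂ^{n_u} with ν ≠ 0 satisfy A x₀ + B ν = z₀ x₀ and C x₀ + D ν = 0. Then the input sequence u(k) = z₀^k ν is unbounded, with ‖u(k)‖ = |z₀|^k ‖ν‖ → ∞ as k → ∞, while the resulting output with initial state x(0) = x₀ and dynamics x(k+1) = A x(k) + B u(k), y(k) = C x(k) + D u(k), satisfies y(k) = 0 for all k. Hence an unbounded actuator attack exists whose effect on the output is identically zero. -/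

import Mathlib

open Matrix Filter

/-- Core of Proposition 1: a zero direction `(x₀, ν)`, `ν ≠ 0`, at a zero
`z₀` with `|z₀| > 1` generates an unbounded input `u(k) = z₀^k ν` with
`‖u(k)‖ = |z₀|^k ‖ν‖ → ∞`, whose effect on the output is identically zero:
an unbounded stealthy actuator attack. -/
theorem unbounded_stealthy_actuator_attack
    (n n_u n_y : ℕ)
    (A : Matrix (Fin n) (Fin n) ℂ) (B : Matrix (Fin n) (Fin n_u) ℂ)
    (C : Matrix (Fin n_y) (Fin n) ℂ) (D : Matrix (Fin n_y) (Fin n_u) ℂ)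
    (z₀ : ℂ) (hz : 1 < ‖z₀‖)
    (x₀ : Fin n → ℂ) (ν : Fin n_u → ℂ) (hν : ν ≠ 0)
    (hdir : A.mulVec x₀ + B.mulVec ν = z₀ • x₀)
    (hout : C.mulVec x₀ + D.mulVec ν = 0)
    (u : ℕ → Fin n_u → ℂ) (hu : ∀ k, u k = z₀ ^ k • ν)
    (x : ℕ → Fin n → ℂ) (hx0 : x 0 = x₀)
    (hxrec : ∀ k, x (k + 1) = A.mulVec (x k) + B.mulVec (u k))
    (y : ℕ → Fin n_y → ℂ) (hy : ∀ k, y k = C.mulVec (x k) + D.mulVec (u k)) :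
    (∀ k : ℕ, ‖u k‖ = ‖z₀‖ ^ k * ‖ν‖) ∧
    Tendsto (fun k : ℕ => ‖u k‖) atTop atTop ∧
    ∀ k : ℕ, y k = 0 := by
  have hnorm : ∀ k : ℕ, ‖u k‖ = ‖z₀‖ ^ k * ‖ν‖ := by
    intro k
    rw [hu k, norm_smul, norm_pow]
  have hxk : ∀ k : ℕ, x k = z₀ ^ k • x₀ := by
    intro k
    induction k with
    | zero => simp [hx0]
    | succ k ih =>
      rw [hxrec k, ih, hu k, Matrix.mulVec_smul, Matrix.mulVec_smul, ← smul_add,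
        hdir, smul_smul, pow_succ, mul_comm]
  refine ⟨hnorm, ?_, ?_⟩
  · have : Tendsto (fun k : ℕ => ‖z₀‖ ^ k * ‖ν‖) atTop atTop := by
      apply Tendsto.atTop_mul_const (norm_pos_iff.mpr hν)
      exact tendsto_pow_atTop_atTop_of_one_lt hz
    exact this.congr fun k => (hnorm k).symm
  · intro k
    rw [hy k, hxk k, hu k, Matrix.mulVec_smul, Matrix.mulVec_smul, ← smul_add,
      hout, smul_zero]
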